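/- For every real A with 0 < A < 1 and every integer T ≥ 2, the sum ν_{T−1} = ∑_{t=1}^{T−1} (1/t²) ∏_{j=t+1}^{T−1} (1 − A/j) satisfies ν_{T−1} ≤ 2^A · ((2 − A)/(1 − A)) · T^{−A} (in particular ν_{T−1} = O(T^{−A})). -/

import Mathlib

open Finset Real

lemma tele_prod (a : ℕ) (ha : 1 ≤ a) : ∀ b : ℕ, a ≤ b + 1 →
    ∏ j ∈ Finset.Icc a b, ((j : ℝ) / (j + 1)) = a / (b + 1)
  | 0, hab => by interval_cases a <;> simp
  | b + 1, hab => by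
    rcases eq_or_lt_of_le hab with h | h
    · subst h
      rw [Finset.Icc_eq_empty (by omega)]
      simp
      rw [div_self (by push_cast; positivity)]
    · have hab' : a ≤ b + 1 := by omega
      rw [Finset.prod_Icc_succ_top hab', tele_prod a ha b hab']
      have h1 : ((b:ℝ) + 1) ≠ 0 := by positivity
      have h2 : ((b:ℝ) + 2) ≠ 0 := by positivity
      push_cast
      field_simp

lemma factor_le (A : ℝ) (hA0 : 0 ≤ A) (hA1 : A ≤ 1) (j : ℕ) (hj : 1 ≤ j) :
    1 - A / j ≤ ((j : ℝ) / (j + 1)) ^ A := by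
  have hj0 : (0:ℝ) < j := by exact_mod_cast hj
  have hs : (-1:ℝ) ≤ 1 / (j:ℝ) := by
    have h0 : (0:ℝ) ≤ 1 / (j:ℝ) := by positivity
    linarith
  have hBer : ((1:ℝ) + 1 / j) ^ A ≤ 1 + A / j := by
    have h := rpow_one_add_le_one_add_mul_self (s := 1/(j:ℝ)) hs hA0 hA1
    simpa [mul_one_div, div_eq_mul_inv] using h
  have hpos : (0:ℝ) < ((1:ℝ) + 1/(j:ℝ)) ^ A := Real.rpow_pos_of_pos (by positivity) A
  have h1A : 0 ≤ 1 - A / (j:ℝ) := by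
    have hAj : A / j ≤ 1 := by
      rw [div_le_one hj0]
      exact hA1.trans (by exact_mod_cast hj)
    linarith
  have key : (1 - A / (j:ℝ)) * ((1:ℝ) + 1 / j) ^ A ≤ 1 := by
    calc (1 - A / (j:ℝ)) * ((1:ℝ) + 1/j) ^ A ≤ (1 - A/j) * (1 + A/j) :=
          mul_le_mul_of_nonneg_left hBer h1A
      _ = 1 - (A/j)^2 := by ring
      _ ≤ 1 := by nlinarith [sq_nonneg (A/(j:ℝ))]
  have heq : ((j:ℝ) / (j + 1)) ^ A = (((1:ℝ) + 1/j) ^ A)⁻¹ := by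
    rw [← Real.inv_rpow (by positivity)]
    congr 1
    field_simp
  rw [heq, ← one_div]
  exact (le_div_iff₀ hpos).mpr key

lemma bern_down (A : ℝ) (hA0 : 0 < A) (hA1 : A < 1) (t : ℕ) (ht : 2 ≤ t) :
    (1 - A) * (t:ℝ) ^ (A - 2) ≤ ((t:ℝ) - 1) ^ (A - 1) - (t:ℝ) ^ (A - 1) := by
  have ht2 : (2:ℝ) ≤ t := by exact_mod_cast ht
  have ht0 : (0:ℝ) < t := by linarith
  set q := 1 - A with hq
  have hq0 : 0 < q := by simp [hq]; linarith
  have hq1 : q < 1 := by simp [hq]; linarith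
  have hinv : 1/(t:ℝ) ≤ 1/2 := by
    apply one_div_le_one_div_of_le <;> linarith
  have hinv0 : 0 < 1/(t:ℝ) := by positivity
  have hx : (0:ℝ) < 1 - 1/t := by linarith
  have hy : (0:ℝ) < 1 - q/t := by
    have : q/(t:ℝ) < 1/t := by gcongr
    linarith
  have hBer : (1 - 1/(t:ℝ)) ^ q ≤ 1 - q/t := by
    have h := rpow_one_add_le_one_add_mul_self (s := -(1/(t:ℝ))) (by linarith) hq0.le hq1.le
    have e1 : (1:ℝ) + -(1/t) = 1 - 1/t := by ring
    have e2 : (1:ℝ) + q * -(1/t) = 1 - q/t := by ring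
    rw [e1, e2] at h
    exact h
  have h2 : 1 + q/(t:ℝ) ≤ (1 - 1/(t:ℝ)) ^ (A - 1) := by
    have hA1q : A - 1 = -q := by simp [hq]
    rw [hA1q, Real.rpow_neg hx.le]
    have step1 : 1 + q/(t:ℝ) ≤ (1 - q/t)⁻¹ := by
      rw [← one_div, le_div_iff₀ hy]
      nlinarith [sq_nonneg (q/(t:ℝ))]
    exact step1.trans (inv_anti₀ (Real.rpow_pos_of_pos hx q) hBer)
  have hsplit : ((t:ℝ) - 1) ^ (A-1) = (1 - 1/(t:ℝ)) ^ (A-1) * (t:ℝ)^(A-1) := by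
    rw [← Real.mul_rpow hx.le ht0.le]
    congr 1
    field_simp
  have hmul : (1 + q/(t:ℝ)) * (t:ℝ)^(A-1) ≤ ((t:ℝ) - 1) ^ (A-1) := by
    rw [hsplit]
    exact mul_le_mul_of_nonneg_right h2 (Real.rpow_nonneg ht0.le _)
  have hpow : (1 + q/(t:ℝ)) * (t:ℝ)^(A-1) = (t:ℝ)^(A-1) + q * (t:ℝ)^(A-2) := by
    have e : (t:ℝ)^(A-2) = (t:ℝ)^(A-1) / t := by
      rw [show A - 2 = (A-1) - 1 by ring, Real.rpow_sub ht0, Real.rpow_one]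
    rw [e]
    ring
  rw [hpow] at hmul
  linarith

lemma sum_pow_le (A : ℝ) (hA0 : 0 < A) (hA1 : A < 1) (T : ℕ) (hT : 2 ≤ T) :
    ∑ t ∈ Finset.Icc 1 (T-1), (t:ℝ)^(A-2) ≤ (2-A)/(1-A) := by
  have h1A : (0:ℝ) < 1 - A := by linarith
  rw [(by ext x; simp; omega : Finset.Icc 1 (T-1) = Finset.Ico 1 T), Finset.sum_Ico_eq_sum_range]
  obtain ⟨m, rfl⟩ : ∃ m, T = m + 2 := ⟨T - 2, by omega⟩
  have hm1 : m + 2 - 1 = m + 1 := rfl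
  rw [hm1, Finset.sum_range_succ']
  have hf0 : ((1 + 0 : ℕ):ℝ)^(A-2) = 1 := by norm_num
  rw [hf0]
  have hsum : ∑ i ∈ Finset.range m, ((1 + (i+1) : ℕ):ℝ)^(A-2)
      ≤ ∑ i ∈ Finset.range m, (((i:ℝ)+1)^(A-1) - ((i:ℝ)+2)^(A-1)) / (1-A) := by
    apply Finset.sum_le_sum
    intro i _
    rw [le_div_iff₀ h1A]
    have hb := bern_down A hA0 hA1 (i+2) (by omega)
    push_cast at hb ⊢
    have e : ((i:ℝ)+2) - 1 = (i:ℝ)+1 := by ring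
    rw [e] at hb
    have e2 : (1:ℝ) + ((i:ℝ)+1) = (i:ℝ)+2 := by ring
    rw [e2]
    linarith
  have htel : ∑ i ∈ Finset.range m, (((i:ℝ)+1)^(A-1) - ((i:ℝ)+2)^(A-1))
      = ((0:ℝ)+1)^(A-1) - ((m:ℝ)+1)^(A-1) := by
    have h := Finset.sum_range_sub' (f := fun i => ((i:ℝ)+1)^(A-1)) m
    push_cast at h
    rw [← h]
    apply Finset.sum_congr rfl
    intro i _
    have e : (i:ℝ) + 1 + 1 = (i:ℝ) + 2 := by ring
    rw [e]
  have hbound : ∑ i ∈ Finset.range m, ((1 + (i+1) : ℕ):ℝ)^(A-2) ≤ 1/(1-A) := by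
    refine hsum.trans ?_
    rw [← Finset.sum_div, htel]
    have h1 : ((0:ℝ)+1)^(A-1) = 1 := by norm_num
    have h2 : 0 ≤ ((m:ℝ)+1)^(A-1) := Real.rpow_nonneg (by positivity) _
    rw [h1]
    gcongr
    linarith
  have : (1:ℝ) + 1/(1-A) = (2-A)/(1-A) := by field_simp; ring
  linarith [hbound]

/-- For `0 < A < 1` and integers `T ≥ 2`,
`∑_{t=1}^{T-1} (1/t²) ∏_{j=t+1}^{T-1} (1 - A/j) ≤ 2^A · ((2-A)/(1-A)) · T^{-A}`. -/
theorem sum_prod_one_sub_div_le_rpow (A : ℝ) (hA0 : 0 < A) (hA1 : A < 1)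
    (T : ℕ) (hT : 2 ≤ T) :
    ∑ t ∈ Finset.Icc 1 (T - 1),
        (1 / (t : ℝ) ^ 2) * ∏ j ∈ Finset.Icc (t + 1) (T - 1), (1 - A / (j : ℝ)) ≤
      (2 : ℝ) ^ A * ((2 - A) / (1 - A)) * (T : ℝ) ^ (-A) := by
  have hT0 : (0:ℝ) < T := by exact_mod_cast (by omega : 0 < T)
  have hstep : ∀ t ∈ Finset.Icc 1 (T-1),
      (1/(t:ℝ)^2) * ∏ j ∈ Finset.Icc (t+1) (T-1), (1 - A/(j:ℝ))
        ≤ (2:ℝ)^A * (T:ℝ)^(-A) * (t:ℝ)^(A-2) := by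
    intro t htmem
    rw [Finset.mem_Icc] at htmem
    obtain ⟨ht1, ht2⟩ := htmem
    have ht0 : (0:ℝ) < t := by exact_mod_cast ht1
    have ht1' : (1:ℝ) ≤ t := by exact_mod_cast ht1
    have hprod : ∏ j ∈ Finset.Icc (t+1) (T-1), (1 - A/(j:ℝ))
        ≤ (((t:ℝ)+1) / T) ^ A := by
      have hle : ∏ j ∈ Finset.Icc (t+1) (T-1), (1 - A/(j:ℝ))
          ≤ ∏ j ∈ Finset.Icc (t+1) (T-1), ((j:ℝ)/((j:ℝ)+1))^A := by
        apply Finset.prod_le_prod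
        · intro j hj
          rw [Finset.mem_Icc] at hj
          have hj1 : (1:ℝ) ≤ j := by exact_mod_cast (by omega : 1 ≤ j)
          have : A / (j:ℝ) ≤ 1 := by
            rw [div_le_one (by linarith)]
            linarith
          linarith
        · intro j hj
          rw [Finset.mem_Icc] at hj
          exact factor_le A hA0.le hA1.le j (by omega)
      refine hle.trans_eq ?_
      rw [Real.finset_prod_rpow _ _ (fun j _ => by positivity) A]
      congr 1
      rw [tele_prod (t+1) (by omega) (T-1) (by omega)]
      have hc : ((T - 1 : ℕ) : ℝ) + 1 = (T : ℝ) := by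
        rw [Nat.cast_sub (by omega : 1 ≤ T)]
        norm_num
      rw [hc]
      push_cast
      ring
    calc (1/(t:ℝ)^2) * ∏ j ∈ Finset.Icc (t+1) (T-1), (1 - A/(j:ℝ))
        ≤ (1/(t:ℝ)^2) * (((t:ℝ)+1)/T)^A :=
          mul_le_mul_of_nonneg_left hprod (by positivity)
      _ ≤ (1/(t:ℝ)^2) * ((2*(t:ℝ))/T)^A := by
          gcongr
          linarith
      _ = (2:ℝ)^A * (T:ℝ)^(-A) * (t:ℝ)^(A-2) := by
          rw [Real.div_rpow (by positivity) hT0.le,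
            Real.mul_rpow (by norm_num) ht0.le,
            Real.rpow_neg hT0.le,
            show A - 2 = A - (2:ℕ) by norm_num,
            Real.rpow_sub ht0, Real.rpow_natCast]
          field_simp
  calc ∑ t ∈ Finset.Icc 1 (T-1),
        (1/(t:ℝ)^2) * ∏ j ∈ Finset.Icc (t+1) (T-1), (1 - A/(j:ℝ))
      ≤ ∑ t ∈ Finset.Icc 1 (T-1), (2:ℝ)^A * (T:ℝ)^(-A) * (t:ℝ)^(A-2) :=
        Finset.sum_le_sum hstep
    _ = (2:ℝ)^A * (T:ℝ)^(-A) * ∑ t ∈ Finset.Icc 1 (T-1), (t:ℝ)^(A-2) := by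
        rw [← Finset.mul_sum]
    _ ≤ (2:ℝ)^A * (T:ℝ)^(-A) * ((2-A)/(1-A)) := by
        apply mul_le_mul_of_nonneg_left (sum_pow_le A hA0 hA1 T hT) (by positivity)
    _ = (2:ℝ)^A * ((2-A)/(1-A)) * (T:ℝ)^(-A) := by ring
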